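/- Let (X,ρ) be a compression of a preorder (Y,≤), i.e., there is a compression map θ : Y → X, where ≤ is reflexive and transitive. If Y has a cross-cut of length one or two, then there is a subset σ of ρ such that σ is a G-grading set for ρ for every group G. -/

import Mathlib

open scoped Classical

universe u v

/-- The interval `[x,y] = {z | x ρ z and z ρ y}` determined by a relation `ρ`. -/
def RelInterval {X : Type*} (ρ : X → X → Prop) (x y : X) : Set X :=
  {z | ρ x z ∧ ρ z y}

/-- A relation is locally finite if every interval is finite. -/
def RelLocallyFinite {X : Type*} (ρ : X → X → Prop) : Prop :=
  ∀ x y, (RelInterval ρ x y).Finite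

/-- A relation is balanced if it is reflexive and whenever
`w ρ x`, `x ρ y`, `y ρ z`, `w ρ z` all hold, `w ρ y ↔ x ρ z`. -/
def RelBalanced {X : Type*} (ρ : X → X → Prop) : Prop :=
  (∀ x, ρ x x) ∧
  ∀ w x y z, ρ w x → ρ x y → ρ y z → ρ w z → (ρ w y ↔ ρ x z)

/-- The underlying set of the generalized incidence ring `I(X,ρ,R)`:
functions `f : X → X → R` with `f x y ≠ 0 → x ρ y`. -/
def IncFun {X : Type*} (ρ : X → X → Prop) (R : Type*) [Ring R] :
    Set (X → X → R) :=
  {f | ∀ x y, f x y ≠ 0 → ρ x y}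

/-- The convolution product on `I(X,ρ,R)`. -/
noncomputable def conv {X R : Type*} [Ring R] (ρ : X → X → Prop)
    (f g : X → X → R) : X → X → R :=
  fun x y => if ρ x y then ∑ᶠ z ∈ RelInterval ρ x y, f x z * g z y else 0

/-- The function `e` with `e x x = 1` and `e x y = 0` for `x ≠ y`. -/
noncomputable def eId (X R : Type*) [Ring R] : X → X → R :=
  fun x y => if x = y then 1 else 0

/-- The matrix unit `e_{xy}`: value `1` at `(x,y)` and `0` elsewhere. -/
noncomputable def eUnit {X : Type*} (R : Type*) [Ring R] (x y : X) : X → X → R :=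
  fun i j => if i = x ∧ j = y then 1 else 0

/-- A homomorphism `Φ : ρ → G`: `Φ x y * Φ y z = Φ x z` on transitive triples. -/
def IsRelHom {X G : Type*} [Mul G] (ρ : X → X → Prop) (Φ : X → X → G) : Prop :=
  ∀ x y z, ρ x y → ρ y z → ρ x z → Φ x y * Φ y z = Φ x z

/-- The homogeneous component `S_a` induced by `Φ`. -/
def gradeSet {X G : Type*} (R : Type*) [Ring R] (ρ : X → X → Prop)
    (Φ : X → X → G) (a : G) : Set (X → X → R) :=
  {f | (∀ x y, f x y ≠ 0 → ρ x y) ∧ ∀ x y, f x y ≠ 0 → Φ x y = a}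

/-- The image `{Φ x y : x ρ y}` of a homomorphism `Φ : ρ → G`. -/
def RelImage {X G : Type*} (ρ : X → X → Prop) (Φ : X → X → G) : Set G :=
  {a | ∃ x y, ρ x y ∧ Φ x y = a}

/-- `θ : X₂ → X₁` is a compression map from `(X₂,ρ₂)` onto `(X₁,ρ₁)`. -/
structure IsCompression {X₁ X₂ : Type*} (ρ₁ : X₁ → X₁ → Prop)
    (ρ₂ : X₂ → X₂ → Prop) (θ : X₂ → X₁) : Prop where
  surj : Function.Surjective θ
  mono : ∀ x y, ρ₂ x y → ρ₁ (θ x) (θ y)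
  lift : ∀ a₁ a₂ a₃, ρ₁ a₁ a₂ → ρ₁ a₂ a₃ → ρ₁ a₁ a₃ →
    ∃ x₁ x₂ x₃, ρ₂ x₁ x₂ ∧ ρ₂ x₂ x₃ ∧ ρ₂ x₁ x₃ ∧
      θ x₁ = a₁ ∧ θ x₂ = a₂ ∧ θ x₃ = a₃
  bij : Set.BijOn (fun p : X₂ × X₂ => (θ p.1, θ p.2))
    {p | ρ₂ p.1 p.2 ∧ p.1 ≠ p.2} {q | ρ₁ q.1 q.2 ∧ q.1 ≠ q.2}

/-- `σ ⊆ ρ` is a `G`-grading set for `ρ`: every function `φ : σ → G`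
extends to a homomorphism `Φ : ρ → G` which is unique on `ρ`. -/
def IsGradingSet (G : Type*) [Mul G] {X : Type*} (ρ : X → X → Prop)
    (σ : Set (X × X)) : Prop :=
  (∀ p ∈ σ, ρ p.1 p.2) ∧
  ∀ φ : X × X → G, ∃ Φ : X → X → G,
    IsRelHom ρ Φ ∧ (∀ p ∈ σ, Φ p.1 p.2 = φ p) ∧
    ∀ Ψ : X → X → G, IsRelHom ρ Ψ → (∀ p ∈ σ, Ψ p.1 p.2 = φ p) →
      ∀ x y, ρ x y → Ψ x y = Φ x y

/-- The map `h : I(X₁,ρ₁,R) → I(X₂,ρ₂,R)` induced by a compression `θ : X₂ → X₁`. -/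
noncomputable def compressMap {X₁ X₂ : Type*} (R : Type*) [Ring R]
    (ρ₂ : X₂ → X₂ → Prop) (θ : X₂ → X₁) (f : X₁ → X₁ → R) : X₂ → X₂ → R :=
  fun x y => if ρ₂ x y then f (θ x) (θ y) else 0

/-- A transitive triple: `a ρ b`, `b ρ c`, `a ρ c`. -/
def TransTriple {X : Type*} (ρ : X → X → Prop) (a b c : X) : Prop :=
  ρ a b ∧ ρ b c ∧ ρ a c

/-- A stable relation: balanced, and for all pairwise distinct `a,b,c,d`,
`a ρ b`, `a ρ c`, `b ρ c`, `b ρ d`, `c ρ d` imply `a ρ d`. -/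
def RelStable {X : Type*} (ρ : X → X → Prop) : Prop :=
  RelBalanced ρ ∧
  ∀ a b c d : X, a ≠ b → a ≠ c → a ≠ d → b ≠ c → b ≠ d → c ≠ d →
    ρ a b → ρ a c → ρ b c → ρ b d → ρ c d → ρ a d

/-- `x` is a clasp. -/
def IsClasp {X : Type*} (ρ : X → X → Prop) (x : X) : Prop :=
  ∃ w y, w ≠ x ∧ y ≠ x ∧ ρ w x ∧ ρ x y ∧ ¬ ρ w y

/-- `x` is a locked clasp. -/
def IsLockedClasp {X : Type*} (ρ : X → X → Prop) (x : X) : Prop :=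
  ∃ u v w y : X, u ≠ x ∧ v ≠ x ∧ w ≠ x ∧ y ≠ x ∧ ¬ ρ w y ∧
    TransTriple ρ u x y ∧ TransTriple ρ u x v ∧ TransTriple ρ w x v

/-- `A` is a cross-cut for the (pre)order `ρ` on `X`. -/
def IsCrossCut {X : Type*} (ρ : X → X → Prop) (A : Set X) : Prop :=
  (∀ a ∈ A, ∀ b ∈ A, a ≠ b → ¬ ρ a b ∧ ¬ ρ b a) ∧
  (∀ x : X, ∃ a ∈ A, ρ x a ∨ ρ a x) ∧
  (∀ C : Set X, IsChain ρ C → ∃ C', C ⊆ C' ∧ IsChain ρ C' ∧ (A ∩ C').Nonempty)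

universe w

section AuxGradingTransfer

variable {Y : Type*}

theorem relHom_refl_one {G : Type*} [Group G] {le : Y → Y → Prop} {Ψ : Y → Y → G}
    (h : IsRelHom le Ψ) {w : Y} (hw : le w w) : Ψ w w = 1 := by
  have := h w w w hw hw hw
  rwa [mul_eq_right] at this

theorem isGradingSet_of_compression {X : Type*} {G : Type*} [Group G]
    (ρ : X → X → Prop) (le : Y → Y → Prop) (hrefl : ∀ y, le y y)
    (θ : Y → X) (hθ : IsCompression ρ le θ) (τ : Set (Y × Y))
    (hτle : ∀ p ∈ τ, le p.1 p.2) (hg : IsGradingSet G le τ) :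
    IsGradingSet G ρ ((fun p : Y × Y => (θ p.1, θ p.2)) '' τ) := by
  have hne : ∀ {y1 y2 : Y}, le y1 y2 → θ y1 = θ y2 → y1 = y2 := by
    intro y1 y2 h he
    by_contra hne
    exact (hθ.bij.mapsTo (show (y1, y2) ∈ _ from ⟨h, hne⟩)).2 he
  constructor
  · rintro p ⟨q, hq, rfl⟩
    exact hθ.mono _ _ (hτle q hq)
  · intro φ
    obtain ⟨Ψ, hΨhom, hΨext, hΨuniq⟩ := hg.2 (fun q => φ (θ q.1, θ q.2))
    have hval : ∀ {y1 y2 z1 z2 : Y}, le y1 y2 → le z1 z2 → θ y1 = θ z1 → θ y2 = θ z2 →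
        Ψ y1 y2 = Ψ z1 z2 := by
      intro y1 y2 z1 z2 h1 h2 e1 e2
      by_cases he : θ y1 = θ y2
      · have hy12 : y1 = y2 := hne h1 he
        have hz12 : z1 = z2 := hne h2 (by rw [← e1, ← e2]; exact he)
        subst hy12; subst hz12
        rw [relHom_refl_one hΨhom (hrefl y1), relHom_refl_one hΨhom (hrefl z1)]
      · have hy : (y1, y2) ∈ {p : Y × Y | le p.1 p.2 ∧ p.1 ≠ p.2} :=
          ⟨h1, fun hh => he (congrArg θ hh)⟩
        have hz : (z1, z2) ∈ {p : Y × Y | le p.1 p.2 ∧ p.1 ≠ p.2} :=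
          ⟨h2, fun hh => he (by rw [e1, e2]; exact congrArg θ hh)⟩
        have := hθ.bij.injOn hy hz (by simp [e1, e2])
        rw [show y1 = z1 from congrArg Prod.fst this, show y2 = z2 from congrArg Prod.snd this]
    classical
    let Φ : X → X → G := fun x1 x2 =>
      if h : ∃ p : Y × Y, le p.1 p.2 ∧ θ p.1 = x1 ∧ θ p.2 = x2
      then Ψ h.choose.1 h.choose.2 else 1
    have hkey : ∀ y1 y2, le y1 y2 → Φ (θ y1) (θ y2) = Ψ y1 y2 := by
      intro y1 y2 h
      have hex : ∃ p : Y × Y, le p.1 p.2 ∧ θ p.1 = θ y1 ∧ θ p.2 = θ y2 := ⟨(y1, y2), h, rfl, rfl⟩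
      simp only [Φ, dif_pos hex]
      exact hval hex.choose_spec.1 h hex.choose_spec.2.1 hex.choose_spec.2.2
    refine ⟨Φ, ?_, ?_, ?_⟩
    · intro x1 x2 x3 h12 h23 h13
      obtain ⟨y1, y2, y3, l12, l23, l13, e1, e2, e3⟩ := hθ.lift x1 x2 x3 h12 h23 h13
      rw [← e1, ← e2, ← e3, hkey _ _ l12, hkey _ _ l23, hkey _ _ l13]
      exact hΨhom _ _ _ l12 l23 l13
    · rintro p ⟨q, hq, rfl⟩
      rw [show (θ q.1, θ q.2).1 = θ q.1 from rfl, show (θ q.1, θ q.2).2 = θ q.2 from rfl,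
        hkey _ _ (hτle q hq)]
      exact hΨext q hq
    · intro Ξ hΞhom hΞext x1 x2 hx
      have hΞτ : ∀ q ∈ τ, Ξ (θ q.1) (θ q.2) = φ (θ q.1, θ q.2) := fun q hq =>
        hΞext (θ q.1, θ q.2) ⟨q, hq, rfl⟩
      have hΞθ : IsRelHom le (fun u v => Ξ (θ u) (θ v)) := fun u v w h1 h2 h3 =>
        hΞhom _ _ _ (hθ.mono _ _ h1) (hθ.mono _ _ h2) (hθ.mono _ _ h3)
      have huniq := hΨuniq _ hΞθ hΞτ
      by_cases hxe : x1 = x2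
      · subst hxe
        obtain ⟨y, rfl⟩ := hθ.surj x1
        rw [relHom_refl_one hΞhom hx, hkey _ _ (hrefl y), relHom_refl_one hΨhom (hrefl y)]
      · obtain ⟨⟨y1, y2⟩, hyp, he⟩ := hθ.bij.surjOn (show (x1, x2) ∈ _ from ⟨hx, hxe⟩)
        have e1 : θ y1 = x1 := congrArg Prod.fst he
        have e2 : θ y2 = x2 := congrArg Prod.snd he
        rw [← e1, ← e2, hkey _ _ hyp.1]
        exact huniq y1 y2 hyp.1

end AuxGradingTransfer
section AuxCrossCutOne

variable {Y : Type*}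

theorem gradingSet_of_crosscut_one {G : Type*} [Group G] (le : Y → Y → Prop)
    (hrefl : ∀ y, le y y) (htrans : ∀ x y z, le x y → le y z → le x z)
    (a : Y) (comp : ∀ y, le y a ∨ le a y) :
    IsGradingSet G le {p : Y × Y | (le p.1 a ∧ p.2 = a ∧ p.1 ≠ a) ∨
      (p.1 = a ∧ le a p.2 ∧ ¬ le p.2 a)} := by
  classical
  constructor
  · rintro ⟨y, z⟩ (⟨h1, rfl, _⟩ | ⟨rfl, h1, _⟩) <;> exact h1
  · intro φ
    set d : Y → G := fun y => if y = a then 1 else φ (y, a) with hd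
    set u : Y → G := fun y => if le y a then (d y)⁻¹ else φ (a, y) with hu
    set Ψ : Y → Y → G := fun y z =>
      if le z a then d y * (d z)⁻¹ else if le y a then d y * u z else (u y)⁻¹ * u z with hΨ
    have e1 : ∀ y z, le z a → Ψ y z = d y * (d z)⁻¹ := by
      intro y z h; simp only [Ψ, if_pos h]
    have e2 : ∀ y z, ¬ le z a → le y a → Ψ y z = d y * u z := by
      intro y z h h'; simp only [Ψ, if_neg h, if_pos h']
    have e3 : ∀ y z, ¬ le z a → ¬ le y a → Ψ y z = (u y)⁻¹ * u z := by
      intro y z h h'; simp only [Ψ, if_neg h, if_neg h']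
    have hhom : IsRelHom le Ψ := by
      intro x y z hxy hyz hxz
      by_cases hza : le z a
      · rw [e1 _ _ hza, e1 _ _ (htrans _ _ _ hyz hza), e1 _ _ hza]; group
      · by_cases hya : le y a
        · rw [e2 _ _ hza hya, e1 _ _ hya, e2 _ _ hza (htrans _ _ _ hxy hya)]; group
        · by_cases hxa : le x a
          · rw [e3 _ _ hza hya, e2 _ _ hya hxa, e2 _ _ hza hxa]; group
          · rw [e3 _ _ hza hya, e3 _ _ hya hxa, e3 _ _ hza hxa]; group
    refine ⟨Ψ, hhom, ?_, ?_⟩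
    · rintro ⟨y, z⟩ (⟨h1, he, h2⟩ | ⟨he, h1, h2⟩) <;> rw [he]
      · rw [e1 _ _ (hrefl a)]
        simp only [d, if_pos rfl, if_neg h2, inv_one, mul_one]
        exact congrArg (fun t => φ (y, t)) he.symm
      · rw [e2 _ _ h2 (hrefl a)]
        simp only [d, u, if_pos rfl, if_neg h2, one_mul]
        exact congrArg (fun t => φ (t, z)) he.symm
    · intro Ξ hΞ hext y z hyz
      have hone : ∀ w, Ξ w w = 1 := fun w => relHom_refl_one hΞ (hrefl w)
      have hda : ∀ w, le w a → Ξ w a = d w := by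
        intro w hw
        by_cases hwa : w = a
        · subst hwa; rw [hone]; simp [d]
        · rw [hext (w, a) (Or.inl ⟨hw, rfl, hwa⟩)]; simp [d, hwa]
      have hua : ∀ w, le a w → Ξ a w = u w := by
        intro w hw
        by_cases hwa : le w a
        · have h2 := hΞ a w a hw hwa (hrefl a)
          rw [hone, hda w hwa] at h2
          simp only [u, if_pos hwa]
          exact eq_inv_of_mul_eq_one_left h2
        · rw [hext (a, w) (Or.inr ⟨rfl, hw, hwa⟩)]; simp [u, hwa]
      by_cases hza : le z a
      · have h2 := hΞ y z a hyz hza (htrans _ _ _ hyz hza)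
        rw [hda _ hza, hda _ (htrans _ _ _ hyz hza)] at h2
        rw [e1 _ _ hza, ← h2]; group
      · by_cases hya : le y a
        · have haz : le a z := (comp z).resolve_left hza
          have h2 := hΞ y a z hya haz hyz
          rw [hda _ hya, hua _ haz] at h2
          rw [e2 _ _ hza hya]
          exact h2.symm
        · have hay : le a y := (comp y).resolve_left hya
          have h2 := hΞ a y z hay hyz (htrans _ _ _ hay hyz)
          rw [hua _ hay, hua _ (htrans _ _ _ hay hyz)] at h2
          rw [e3 _ _ hza hya, ← h2]; group

end AuxCrossCutOne
section AuxCrossCutTwo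

variable {Y : Type*}

/-- Membership in the "middle" set `W`: below both `a,b` or above both. -/
def crossW (le : Y → Y → Prop) (a b : Y) (y : Y) : Prop :=
  (le y a ∧ le y b) ∨ (le a y ∧ le b y)

/-- Comparability relation on `W`. -/
def crossRel (le : Y → Y → Prop) (a b : Y) : Y → Y → Prop :=
  fun x y => crossW le a b x ∧ crossW le a b y ∧ (le x y ∨ le y x)

/-- A choice of representative in each connected component. -/
noncomputable def crossRep (le : Y → Y → Prop) (a b : Y) : Y → Y :=
  fun y => (@Quotient.mk Y (Relation.EqvGen.setoid (crossRel le a b)) y).out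

theorem crossRep_rel (le : Y → Y → Prop) (a b : Y) (y : Y) :
    Relation.EqvGen (crossRel le a b) (crossRep le a b y) y :=
  Quotient.mk_out (s := Relation.EqvGen.setoid (crossRel le a b)) y

theorem crossRep_eq (le : Y → Y → Prop) (a b : Y) {x y : Y}
    (h : Relation.EqvGen (crossRel le a b) x y) :
    crossRep le a b x = crossRep le a b y :=
  congrArg Quotient.out (Quotient.sound h)

theorem crossRep_idem (le : Y → Y → Prop) (a b : Y) (y : Y) :
    crossRep le a b (crossRep le a b y) = crossRep le a b y :=
  crossRep_eq le a b (crossRep_rel le a b y)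

theorem crossW_of_eqvGen (le : Y → Y → Prop) (a b : Y) {x y : Y}
    (h : Relation.EqvGen (crossRel le a b) x y) :
    x = y ∨ (crossW le a b x ∧ crossW le a b y) := by
  induction h with
  | rel u v huv => exact Or.inr ⟨huv.1, huv.2.1⟩
  | refl u => exact Or.inl rfl
  | symm u v _ ih =>
    rcases ih with rfl | ⟨h1, h2⟩
    · exact Or.inl rfl
    · exact Or.inr ⟨h2, h1⟩
  | trans u v w _ _ ih1 ih2 =>
    rcases ih1 with rfl | ⟨h1, h2⟩
    · exact ih2
    · rcases ih2 with rfl | ⟨h3, h4⟩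
      · exact Or.inr ⟨h1, h2⟩
      · exact Or.inr ⟨h1, h4⟩

theorem crossRep_W (le : Y → Y → Prop) (a b : Y) {y : Y} (h : crossW le a b y) :
    crossW le a b (crossRep le a b y) := by
  rcases crossW_of_eqvGen le a b (crossRep_rel le a b y) with he | ⟨h1, _⟩
  · rw [he]; exact h
  · exact h1

/-- The grading set for a cross-cut `{a, b}` of length two. -/
def crossTau (le : Y → Y → Prop) (a b : Y) : Set (Y × Y) :=
  {p | (le p.1 a ∧ p.2 = a ∧ p.1 ≠ a)
    ∨ (le p.1 b ∧ ¬ le p.1 a ∧ p.2 = b ∧ p.1 ≠ b)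
    ∨ (p.1 = a ∧ le a p.2 ∧ ¬ le p.2 a)
    ∨ (p.1 = b ∧ le b p.2 ∧ ¬ le p.2 b ∧ ¬ le a p.2)
    ∨ (le p.1 a ∧ le p.1 b ∧ crossRep le a b p.1 = p.1 ∧ p.2 = b)
    ∨ (p.1 = b ∧ le a p.2 ∧ le b p.2 ∧ crossRep le a b p.2 = p.2)}

end AuxCrossCutTwo
section AuxCrossCutTwoMain

variable {Y : Type*}

theorem gradingSet_of_crosscut_two {G : Type*} [Group G] (le : Y → Y → Prop)
    (hrefl : ∀ y, le y y) (htrans : ∀ x y z, le x y → le y z → le x z)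
    (a b : Y) (nab : ¬ le a b) (nba : ¬ le b a)
    (comp : ∀ y, le y a ∨ le a y ∨ le y b ∨ le b y)
    (fac : ∀ y z, le y z → ∃ c, (c = a ∨ c = b) ∧ (le y c ∨ le c y) ∧ (le z c ∨ le c z)) :
    IsGradingSet G le (crossTau le a b) := by
  classical
  have imp1 : ∀ y, le y a → le b y → False := fun y h1 h2 => nba (htrans _ _ _ h2 h1)
  have imp2 : ∀ y, le y b → le a y → False := fun y h1 h2 => nab (htrans _ _ _ h2 h1)
  constructor
  · intro p hp
    rcases hp with ⟨h, he, -⟩ | ⟨h, -, he, -⟩ | ⟨he, h, -⟩ | ⟨he, h, -, -⟩ | ⟨-, h, -, he⟩ |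
      ⟨he, -, h, -⟩ <;> rw [he] <;> exact h
  · intro φ
    set A : Y → G := fun y => if y = a then 1 else φ (y, a) with hA
    set A' : Y → G := fun y => if le y a then (A y)⁻¹ else φ (a, y) with hA'
    set D : Y → G := fun y => if le (crossRep le a b y) a
      then (A (crossRep le a b y))⁻¹ * φ (crossRep le a b y, b)
      else φ (a, crossRep le a b y) * (φ (b, crossRep le a b y))⁻¹ with hD
    set B : Y → G := fun y => if y = b then 1 else if le y a then A y * D y else φ (y, b) with hB
    set B' : Y → G := fun y => if le y b then (B y)⁻¹
      else if le a y then (D y)⁻¹ * A' y else φ (b, y) with hB'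
    set Ψ : Y → Y → G := fun y z =>
      if le z a then A y * (A z)⁻¹
      else if le z b then B y * (B z)⁻¹
      else if le y a ∧ le a z then A y * A' z
      else if le y b ∧ le b z then B y * B' z
      else if le a y then (A' y)⁻¹ * A' z
      else (B' y)⁻¹ * B' z with hΨ
    -- evaluation lemmas
    have eAa : A a = 1 := by simp [A]
    have eA : ∀ y, y ≠ a → A y = φ (y, a) := by intro y h; simp [A, h]
    have eA'1 : ∀ y, le y a → A' y = (A y)⁻¹ := by intro y h; simp [A', h]
    have eA'2 : ∀ y, ¬ le y a → A' y = φ (a, y) := by intro y h; simp [A', h]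
    have eD : ∀ x y, Relation.EqvGen (crossRel le a b) x y → D x = D y := by
      intro x y h; simp only [D]; rw [crossRep_eq le a b h]
    have eDD : ∀ r, crossRep le a b r = r → le r a → D r = (A r)⁻¹ * φ (r, b) := by
      intro r h hr; simp only [D]; rw [h, if_pos hr]
    have eDU : ∀ r, crossRep le a b r = r → ¬ le r a → D r = φ (a, r) * (φ (b, r))⁻¹ := by
      intro r h hr; simp only [D]; rw [h, if_neg hr]
    have eB1 : B b = 1 := by simp [B]
    have eB2 : ∀ y, le y a → le y b → B y = A y * D y := by
      intro y h1 h2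
      have hyb : y ≠ b := by rintro rfl; exact nba h1
      simp [B, hyb, h1]
    have eB3 : ∀ y, ¬ le y a → y ≠ b → B y = φ (y, b) := by
      intro y h1 h2; simp [B, h1, h2]
    have eB'1 : ∀ y, le y b → B' y = (B y)⁻¹ := by intro y h; simp [B', h]
    have eB'2 : ∀ y, ¬ le y b → le a y → B' y = (D y)⁻¹ * A' y := by
      intro y h1 h2; simp [B', h1, h2]
    have eB'3 : ∀ y, ¬ le y b → ¬ le a y → B' y = φ (b, y) := by
      intro y h1 h2; simp [B', h1, h2]
    have p1 : ∀ y z, le z a → Ψ y z = A y * (A z)⁻¹ := by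
      intro y z h; simp only [Ψ, if_pos h]
    have p2 : ∀ y z, ¬ le z a → le z b → Ψ y z = B y * (B z)⁻¹ := by
      intro y z h1 h2; simp only [Ψ, if_neg h1, if_pos h2]
    have p3 : ∀ y z, ¬ le z a → ¬ le z b → le y a → le a z → Ψ y z = A y * A' z := by
      intro y z h1 h2 h3 h4; simp only [Ψ, if_neg h1, if_neg h2, if_pos (And.intro h3 h4)]
    have p4 : ∀ y z, ¬ le z a → ¬ le z b → ¬ (le y a ∧ le a z) → le y b → le b z →
        Ψ y z = B y * B' z := by
      intro y z h1 h2 h3 h4 h5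
      simp only [Ψ, if_neg h1, if_neg h2, if_neg h3, if_pos (And.intro h4 h5)]
    have p5 : ∀ y z, ¬ le z a → ¬ le z b → ¬ (le y a ∧ le a z) → ¬ (le y b ∧ le b z) →
        le a y → Ψ y z = (A' y)⁻¹ * A' z := by
      intro y z h1 h2 h3 h4 h5
      simp only [Ψ, if_neg h1, if_neg h2, if_neg h3, if_neg h4, if_pos h5]
    have p6 : ∀ y z, ¬ le z a → ¬ le z b → ¬ (le y a ∧ le a z) → ¬ (le y b ∧ le b z) →
        ¬ le a y → Ψ y z = (B' y)⁻¹ * B' z := by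
      intro y z h1 h2 h3 h4 h5
      simp only [Ψ, if_neg h1, if_neg h2, if_neg h3, if_neg h4, if_neg h5]
    have keyD : ∀ x z, crossW le a b x → crossW le a b z → le x z → D x = D z :=
      fun x z hx hz hxz => eD x z (Relation.EqvGen.rel _ _ ⟨hx, hz, Or.inl hxz⟩)
    have hhom : IsRelHom le Ψ := by
      intro x y z hxy hyz hxz
      by_cases hza : le z a
      · rw [p1 _ _ hza, p1 _ _ (htrans _ _ _ hyz hza), p1 _ _ hza]; group
      · by_cases hzb : le z b
        · rw [p2 _ _ hza hzb, p2 _ _ hza hzb]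
          by_cases hya : le y a
          · have hyb : le y b := htrans _ _ _ hyz hzb
            have hxa : le x a := htrans _ _ _ hxy hya
            have hxb : le x b := htrans _ _ _ hxy hyb
            rw [p1 _ _ hya, eB2 _ hya hyb, eB2 _ hxa hxb,
              keyD x y (Or.inl ⟨hxa, hxb⟩) (Or.inl ⟨hya, hyb⟩) hxy]
            group
          · rw [p2 _ _ hya (htrans _ _ _ hyz hzb)]; group
        · by_cases hya : le y a
          · have hxa : le x a := htrans _ _ _ hxy hya
            rw [p1 _ _ hya]
            obtain ⟨c, hc, hyc, hzc⟩ := fac y z hyz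
            rcases hc with hc | hc <;> rw [hc] at hyc hzc
            · have haz : le a z := hzc.resolve_left hza
              rw [p3 _ _ hza hzb hya haz, p3 _ _ hza hzb hxa haz]; group
            · have hbz : le b z := hzc.resolve_left hzb
              have hyb : le y b := hyc.resolve_right (fun h => imp1 y hya h)
              have hxb : le x b := htrans _ _ _ hxy hyb
              by_cases haz : le a z
              · rw [p3 _ _ hza hzb hya haz, p3 _ _ hza hzb hxa haz]; group
              · rw [p4 _ _ hza hzb (fun h => haz h.2) hyb hbz,
                  p4 _ _ hza hzb (fun h => haz h.2) hxb hbz,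
                  eB2 _ hya hyb, eB2 _ hxa hxb,
                  keyD x y (Or.inl ⟨hxa, hxb⟩) (Or.inl ⟨hya, hyb⟩) hxy]
                group
          · by_cases hyb : le y b
            · rw [p2 _ _ hya hyb]
              have hxb : le x b := htrans _ _ _ hxy hyb
              have hbz : le b z := by
                obtain ⟨c, hc, hyc, hzc⟩ := fac y z hyz
                rcases hc with hc | hc <;> rw [hc] at hyc hzc
                · rcases hyc with h | h
                  · exact absurd h hya
                  · exact (imp2 y hyb h).elim
                · exact hzc.resolve_left hzb
              rw [p4 _ _ hza hzb (fun h => hya h.1) hyb hbz]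
              by_cases h3 : le x a ∧ le a z
              · rw [p3 _ _ hza hzb h3.1 h3.2, eB2 _ h3.1 hxb, eB'2 _ hzb h3.2,
                  keyD x z (Or.inl ⟨h3.1, hxb⟩) (Or.inr ⟨h3.2, hbz⟩) hxz]
                group
              · rw [p4 _ _ hza hzb h3 hxb hbz]; group
            · by_cases hay : le a y
              · have haz : le a z := htrans _ _ _ hay hyz
                rw [p5 _ _ hza hzb (fun h => hya h.1) (fun h => hyb h.1) hay]
                by_cases hxa : le x a
                · rw [p3 _ _ hya hyb hxa hay, p3 _ _ hza hzb hxa haz]; group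
                · by_cases h4 : le x b ∧ le b y
                  · have hbz : le b z := htrans _ _ _ h4.2 hyz
                    rw [p4 _ _ hya hyb (fun h => hxa h.1) h4.1 h4.2,
                      p4 _ _ hza hzb (fun h => hxa h.1) h4.1 hbz,
                      eB'2 _ hyb hay, eB'2 _ hzb haz,
                      keyD y z (Or.inr ⟨hay, h4.2⟩) (Or.inr ⟨haz, hbz⟩) hyz]
                    group
                  · by_cases hax : le a x
                    · rw [p5 _ _ hya hyb (fun h => hxa h.1) h4 hax,
                        p5 _ _ hza hzb (fun h => hxa h.1) (fun h => imp2 x h.1 hax) hax]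
                      group
                    · have hbx : le b x := by
                        obtain ⟨c, hc, hxc, hyc⟩ := fac x y hxy
                        rcases hc with hc | hc <;> rw [hc] at hxc hyc
                        · rcases hxc with h | h
                          · exact absurd h hxa
                          · exact absurd h hax
                        · rcases hxc with h | h
                          · rcases hyc with h' | h'
                            · exact absurd h' hyb
                            · exact absurd ⟨h, h'⟩ h4
                          · exact h
                      have hby : le b y := htrans _ _ _ hbx hxy
                      have hbz : le b z := htrans _ _ _ hby hyz
                      have hxb : ¬ le x b := fun h => h4 ⟨h, hby⟩
                      rw [p6 _ _ hya hyb (fun h => hxa h.1) (fun h => hxb h.1) hax,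
                        p6 _ _ hza hzb (fun h => hxa h.1) (fun h => hxb h.1) hax,
                        eB'2 _ hyb hay, eB'2 _ hzb haz,
                        keyD y z (Or.inr ⟨hay, hby⟩) (Or.inr ⟨haz, hbz⟩) hyz]
                      group
              · have hby : le b y := by
                  rcases comp y with h | h | h | h
                  · exact absurd h hya
                  · exact absurd h hay
                  · exact absurd h hyb
                  · exact h
                have hbz : le b z := htrans _ _ _ hby hyz
                rw [p6 _ _ hza hzb (fun h => hya h.1) (fun h => hyb h.1) hay]
                by_cases hxb : le x b
                · rw [p4 _ _ hya hyb (fun h => hay h.2) hxb hby]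
                  by_cases h3 : le x a ∧ le a z
                  · rw [p3 _ _ hza hzb h3.1 h3.2, eB2 _ h3.1 hxb, eB'2 _ hzb h3.2,
                      keyD x z (Or.inl ⟨h3.1, hxb⟩) (Or.inr ⟨h3.2, hbz⟩) hxz]
                    group
                  · rw [p4 _ _ hza hzb h3 hxb hbz]; group
                · have hbx : le b x := by
                    obtain ⟨c, hc, hxc, hyc⟩ := fac x y hxy
                    rcases hc with hc | hc <;> rw [hc] at hxc hyc
                    · rcases hyc with h | h
                      · exact absurd h hya
                      · exact absurd h hay
                    · rcases hxc with h | h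
                      · exact absurd h hxb
                      · exact h
                  have hax : ¬ le a x := fun h => hay (htrans _ _ _ h hxy)
                  have hxa : ¬ le x a := fun h => imp1 x h hbx
                  rw [p6 _ _ hya hyb (fun h => hxa h.1) (fun h => hxb h.1) hax,
                    p6 _ _ hza hzb (fun h => hxa h.1) (fun h => hxb h.1) hax]
                  group
    refine ⟨Ψ, hhom, ?_, ?_⟩
    · rintro ⟨y, z⟩ hp
      rcases hp with ⟨h1, he, h2⟩ | ⟨h1, h2, he, h3⟩ | ⟨he, h1, h2⟩ | ⟨he, h1, h2, h3⟩ |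
        ⟨h1, h2, h3, he⟩ | ⟨he, h1, h2, h3⟩
      · show Ψ y z = φ (y, z)
        rw [show z = a from he, p1 _ _ (hrefl a), eAa, eA y h2]; simp
      · show Ψ y z = φ (y, z)
        rw [show z = b from he, p2 _ _ nba (hrefl b), eB1, eB3 y h2 h3]; simp
      · show Ψ y z = φ (y, z)
        have hzb' : ¬ le z b := fun h => imp2 z h h1
        rw [show y = a from he, p3 _ _ h2 hzb' (hrefl a) h1, eAa, eA'2 z h2]; simp
      · show Ψ y z = φ (y, z)
        have hza' : ¬ le z a := fun h => imp1 z h h1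
        rw [show y = b from he, p4 _ _ hza' h2 (fun h => nba h.1) (hrefl b) h1,
          eB1, eB'3 z h2 h3]
        simp
      · show Ψ y z = φ (y, z)
        rw [show z = b from he, p2 _ _ nba (hrefl b), eB1, eB2 y h1 h2, eDD y h3 h1]
        group
      · show Ψ y z = φ (y, z)
        have hza' : ¬ le z a := fun h => imp1 z h h2
        have hzb' : ¬ le z b := fun h => imp2 z h h1
        rw [show y = b from he, p4 _ _ hza' hzb' (fun h => nba h.1) (hrefl b) h2,
          eB1, eB'2 z hzb' h1, eDU z h3 hza', eA'2 z hza']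
        group
    · intro Ξ hΞ hext y z hyz
      have hone : ∀ w, Ξ w w = 1 := fun w => relHom_refl_one hΞ (hrefl w)
      have hUA : ∀ w, le w a → Ξ w a = A w := by
        intro w hw
        by_cases h : w = a
        · rw [h, hone, eAa]
        · have h2 := hext (w, a) (Or.inl ⟨hw, rfl, h⟩)
          rw [eA w h]; exact h2
      have hUA' : ∀ w, le a w → Ξ a w = A' w := by
        intro w hw
        by_cases h : le w a
        · have h2 := hΞ a w a hw h (hrefl a)
          rw [hone, hUA w h] at h2
          rw [eA'1 w h]
          exact eq_inv_of_mul_eq_one_left h2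
        · have h2 := hext (a, w) (Or.inr (Or.inr (Or.inl ⟨rfl, hw, h⟩)))
          rw [eA'2 w h]; exact h2
      set dX : Y → G := fun w => if le w a then (Ξ w a)⁻¹ * Ξ w b
        else Ξ a w * (Ξ b w)⁻¹ with hdX
      have hE : ∀ u v, crossW le a b u → crossW le a b v → le u v → dX u = dX v := by
        intro u v hu hv huv
        rcases hu with ⟨hua2, hub⟩ | ⟨hau, hbu⟩ <;> rcases hv with ⟨hva, hvb⟩ | ⟨hav, hbv⟩
        · have e1 := hΞ u v a huv hva (htrans _ _ _ huv hva)
          have e2 := hΞ u v b huv hvb (htrans _ _ _ huv hvb)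
          simp only [dX, if_pos hua2, if_pos hva]
          rw [← e1, ← e2]; group
        · have e1 := hΞ u a v hua2 hav huv
          have e2 := hΞ u b v hub hbv huv
          have hnva : ¬ le v a := fun h => imp1 v h hbv
          simp only [dX, if_pos hua2, if_neg hnva]
          have e3 : Ξ u b = Ξ u v * (Ξ b v)⁻¹ := by rw [← e2]; group
          rw [e3, ← e1]; group
        · exact (imp2 v hvb (htrans _ _ _ hau huv)).elim
        · have e1 := hΞ a u v hau huv (htrans _ _ _ hau huv)
          have e2 := hΞ b u v hbu huv (htrans _ _ _ hbu huv)
          have hnua : ¬ le u a := fun h => imp1 u h hbu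
          have hnva : ¬ le v a := fun h => imp1 v h (htrans _ _ _ hbu huv)
          simp only [dX, if_neg hnua, if_neg hnva]
          rw [← e1, ← e2]; group
      have hEG : ∀ u v, Relation.EqvGen (crossRel le a b) u v → dX u = dX v := by
        intro u v h
        induction h with
        | rel x y hxy =>
          rcases hxy.2.2 with h | h
          · exact hE _ _ hxy.1 hxy.2.1 h
          · exact (hE _ _ hxy.2.1 hxy.1 h).symm
        | refl => rfl
        | symm _ _ _ ih => exact ih.symm
        | trans _ _ _ _ _ ih1 ih2 => exact ih1.trans ih2
      have hDX : ∀ w, crossW le a b w → dX w = D w := by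
        intro w hw
        have h1 : dX w = dX (crossRep le a b w) := (hEG _ _ (crossRep_rel le a b w)).symm
        have hid : crossRep le a b (crossRep le a b w) = crossRep le a b w :=
          crossRep_idem le a b w
        rcases crossRep_W le a b hw with ⟨ha1, hb1⟩ | ⟨ha1, hb1⟩
        · have h2 := hext (crossRep le a b w, b)
            (Or.inr (Or.inr (Or.inr (Or.inr (Or.inl ⟨ha1, hb1, hid, rfl⟩)))))
          rw [h1]
          simp only [dX, if_pos ha1]
          rw [hUA _ ha1, show Ξ (crossRep le a b w) b = φ (crossRep le a b w, b) from h2]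
          simp only [D, if_pos ha1]
        · have hnra : ¬ le (crossRep le a b w) a := fun h => imp1 _ h hb1
          have h2 := hext (b, crossRep le a b w)
            (Or.inr (Or.inr (Or.inr (Or.inr (Or.inr ⟨rfl, ha1, hb1, hid⟩)))))
          rw [h1]
          simp only [dX, if_neg hnra]
          rw [hUA' _ ha1, show Ξ b (crossRep le a b w) = φ (b, crossRep le a b w) from h2,
            eA'2 _ hnra]
          simp only [D, if_neg hnra]
      have hUB : ∀ w, le w b → Ξ w b = B w := by
        intro w hw
        by_cases h : w = b
        · rw [h, hone, eB1]
        · by_cases h2 : le w a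
          · have h3 := hDX w (Or.inl ⟨h2, hw⟩)
            simp only [dX, if_pos h2] at h3
            rw [eB2 w h2 hw, ← h3, hUA w h2]; group
          · have h3 := hext (w, b) (Or.inr (Or.inl ⟨hw, h2, rfl, h⟩))
            rw [eB3 w h2 h]; exact h3
      have hUB' : ∀ w, le b w → Ξ b w = B' w := by
        intro w hw
        by_cases h : le w b
        · have h2 := hΞ b w b hw h (hrefl b)
          rw [hone, hUB w h] at h2
          rw [eB'1 w h]
          exact eq_inv_of_mul_eq_one_left h2
        · by_cases h2 : le a w
          · have h3 := hDX w (Or.inr ⟨h2, hw⟩)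
            have hnwa : ¬ le w a := fun hh => imp1 w hh hw
            simp only [dX, if_neg hnwa] at h3
            rw [eB'2 w h h2, ← h3, hUA' _ h2]; group
          · have h3 := hext (b, w) (Or.inr (Or.inr (Or.inr (Or.inl ⟨rfl, hw, h, h2⟩))))
            rw [eB'3 w h h2]; exact h3
      by_cases hza : le z a
      · have h2 := hΞ y z a hyz hza (htrans _ _ _ hyz hza)
        rw [hUA _ hza, hUA _ (htrans _ _ _ hyz hza)] at h2
        rw [p1 _ _ hza, ← h2]; group
      · by_cases hzb : le z b
        · have h2 := hΞ y z b hyz hzb (htrans _ _ _ hyz hzb)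
          rw [hUB _ hzb, hUB _ (htrans _ _ _ hyz hzb)] at h2
          rw [p2 _ _ hza hzb, ← h2]; group
        · by_cases h3 : le y a ∧ le a z
          · have h2 := hΞ y a z h3.1 h3.2 hyz
            rw [hUA _ h3.1, hUA' _ h3.2] at h2
            rw [p3 _ _ hza hzb h3.1 h3.2]; exact h2.symm
          · by_cases h4 : le y b ∧ le b z
            · have h2 := hΞ y b z h4.1 h4.2 hyz
              rw [hUB _ h4.1, hUB' _ h4.2] at h2
              rw [p4 _ _ hza hzb h3 h4.1 h4.2]; exact h2.symm
            · by_cases hay : le a y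
              · have h2 := hΞ a y z hay hyz (htrans _ _ _ hay hyz)
                rw [hUA' _ hay, hUA' _ (htrans _ _ _ hay hyz)] at h2
                rw [p5 _ _ hza hzb h3 h4 hay, ← h2]; group
              · have hby : le b y := by
                  obtain ⟨c, hc, hyc, hzc⟩ := fac y z hyz
                  rcases hc with hc | hc <;> rw [hc] at hyc hzc
                  · rcases hyc with h | h
                    · exact absurd (And.intro h (hzc.resolve_left hza)) h3
                    · exact absurd h hay
                  · rcases hyc with h | h
                    · exact absurd (And.intro h (hzc.resolve_left hzb)) h4
                    · exact h
                have h2 := hΞ b y z hby hyz (htrans _ _ _ hby hyz)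
                rw [hUB' _ hby, hUB' _ (htrans _ _ _ hby hyz)] at h2
                rw [p6 _ _ hza hzb h3 h4 hay, ← h2]; group

end AuxCrossCutTwoMain
/-- if `(X,ρ)` is the compression of a preorder `(Y,≤)` having a
cross-cut of length one or two, then there is a subset `σ ⊆ ρ` which is a
`G`-grading set for every group `G`. -/
theorem compression_crosscut_gradingSet {X : Type v} {Y : Type w}
    (ρ : X → X → Prop) (le : Y → Y → Prop)
    (hrefl : ∀ y, le y y) (htrans : ∀ a b c, le a b → le b c → le a c)
    (θ : Y → X) (hθ : IsCompression ρ le θ)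
    (A : Set Y) (hA : IsCrossCut le A) (hcard : A.ncard = 1 ∨ A.ncard = 2) :
    ∃ σ : Set (X × X), (∀ p ∈ σ, ρ p.1 p.2) ∧
      ∀ (G : Type u) [Group G], IsGradingSet G ρ σ := by
  rcases hcard with h1 | h2
  · obtain ⟨a, hAa⟩ := Set.ncard_eq_one.mp h1
    have comp : ∀ y, le y a ∨ le a y := by
      intro y
      obtain ⟨c, hc, h⟩ := hA.2.1 y
      rw [hAa, Set.mem_singleton_iff] at hc
      rw [hc] at h; exact h
    set τ : Set (Y × Y) := {p | (le p.1 a ∧ p.2 = a ∧ p.1 ≠ a) ∨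
      (p.1 = a ∧ le a p.2 ∧ ¬ le p.2 a)} with hτ
    have hτle : ∀ p ∈ τ, le p.1 p.2 := by
      rintro ⟨y, z⟩ (⟨h, he, -⟩ | ⟨he, h, -⟩) <;> rw [he] <;> exact h
    refine ⟨(fun p : Y × Y => (θ p.1, θ p.2)) '' τ, ?_, ?_⟩
    · rintro p ⟨q, hq, rfl⟩
      exact hθ.mono _ _ (hτle q hq)
    · intro G _
      exact isGradingSet_of_compression ρ le hrefl θ hθ τ hτle
        (gradingSet_of_crosscut_one le hrefl htrans a comp)
  · obtain ⟨a, b, hab, hAab⟩ := Set.ncard_eq_two.mp h2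
    have haA : a ∈ A := by rw [hAab]; exact Set.mem_insert _ _
    have hbA : b ∈ A := by rw [hAab]; exact Set.mem_insert_of_mem _ rfl
    have nab : ¬ le a b := (hA.1 a haA b hbA hab).1
    have nba : ¬ le b a := (hA.1 a haA b hbA hab).2
    have comp : ∀ y, le y a ∨ le a y ∨ le y b ∨ le b y := by
      intro y
      obtain ⟨c, hc, h⟩ := hA.2.1 y
      rw [hAab] at hc
      simp only [Set.mem_insert_iff, Set.mem_singleton_iff] at hc
      rcases hc with hc | hc <;> rw [hc] at h
      · rcases h with h | h
        · exact Or.inl h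
        · exact Or.inr (Or.inl h)
      · rcases h with h | h
        · exact Or.inr (Or.inr (Or.inl h))
        · exact Or.inr (Or.inr (Or.inr h))
    have fac : ∀ y z, le y z →
        ∃ c, (c = a ∨ c = b) ∧ (le y c ∨ le c y) ∧ (le z c ∨ le c z) := by
      intro y z hyz
      have hchain : IsChain le {y, z} := by
        intro u hu v hv hne
        simp only [Set.mem_insert_iff, Set.mem_singleton_iff] at hu hv
        rcases hu with rfl | rfl <;> rcases hv with rfl | rfl
        · exact (hne rfl).elim
        · exact Or.inl hyz
        · exact Or.inr hyz
        · exact (hne rfl).elim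
      obtain ⟨C', hsub, hchain', c, hcmem⟩ := hA.2.2 {y, z} hchain
      have hcA : c ∈ A := hcmem.1
      have hcC : c ∈ C' := hcmem.2
      have hyC : y ∈ C' := hsub (Set.mem_insert _ _)
      have hzC : z ∈ C' := hsub (Set.mem_insert_of_mem _ rfl)
      refine ⟨c, ?_, ?_, ?_⟩
      · rw [hAab] at hcA
        simpa using hcA
      · by_cases h : y = c
        · exact Or.inl (h ▸ hrefl y)
        · exact hchain' hyC hcC h
      · by_cases h : z = c
        · exact Or.inl (h ▸ hrefl z)
        · exact hchain' hzC hcC h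
    have hτle : ∀ p ∈ crossTau le a b, le p.1 p.2 := by
      rintro ⟨y, z⟩ (⟨h, he, -⟩ | ⟨h, -, he, -⟩ | ⟨he, h, -⟩ | ⟨he, h, -, -⟩ | ⟨-, h, -, he⟩ |
        ⟨he, -, h, -⟩) <;> rw [he] <;> exact h
    refine ⟨(fun p : Y × Y => (θ p.1, θ p.2)) '' crossTau le a b, ?_, ?_⟩
    · rintro p ⟨q, hq, rfl⟩
      exact hθ.mono _ _ (hτle q hq)
    · intro G _
      exact isGradingSet_of_compression ρ le hrefl θ hθ _ hτle
        (gradingSet_of_crosscut_two le hrefl htrans a b nab nba comp fac)
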